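/- Let d, D ∈ ℕ₊. The set of all maps [0,1]^d → ℝ^D of the form x ↦ π(Flow(V_f)(ι(x))), where f : ℝ^d → ℝ^D is a ReLU MLP of arbitrary depth and width, V_f : ℝ^{d+D} → ℝ^{d+D} is the vector field V_f(x,y) = (0, f(x)), ι(x) = (x,0), and π(x,y) = y, is dense in C([0,1]^d, ℝ^D) with the uniform norm. -/

import Mathlib

open Metric Set Function Filter Topology

noncomputable section

/-- `f` equals the identity outside `S` (supported† on `S`). -/
def SuppDaggerOn {E : Type*} (f : E → E) (S : Set E) : Prop := ∀ x, x ∉ S → f x = x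

/-- `V` vanishes outside `S`. -/
def ZeroOutside {E F : Type*} [Zero F] (V : E → F) (S : Set E) : Prop := ∀ x, x ∉ S → V x = 0

/-- `φ` is the time-1 solution map of the autonomous ODE `ẋ_t = V (x_t)`:
for every initial condition `x` there is a solution curve starting at `x`
whose time-1 value is `φ x`. -/
def IsTime1Flow {E : Type*} [NormedAddCommGroup E] [NormedSpace ℝ E]
    (V : E → E) (φ : E → E) : Prop :=
  ∀ x : E, ∃ γ : ℝ → E, γ 0 = x ∧ (∀ t : ℝ, HasDerivAt γ (V (γ t)) t) ∧ γ 1 = φ x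

/-- `compFlows ψ T = ψ (T-1) ∘ ⋯ ∘ ψ 0`. -/
def compFlows {E : Type*} (ψ : ℕ → E → E) : ℕ → E → E
  | 0 => id
  | T + 1 => ψ T ∘ compFlows ψ T

/-- Orientation preserving: homotopic to the identity. -/
def HomotopicToId {E : Type*} [TopologicalSpace E] (φ : E → E) : Prop :=
  ∃ f : C(E, E), ⇑f = φ ∧ f.Homotopic (ContinuousMap.id E)

/-- The closed unit cube `[0,1]^d`. -/
def cube01 (d : ℕ) : Set (Fin d → ℝ) := Set.univ.pi fun _ => Set.Icc (0:ℝ) 1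

/-- The open unit cube `(0,1)^d`. -/
def cube01open (d : ℕ) : Set (Fin d → ℝ) := Set.univ.pi fun _ => Set.Ioo (0:ℝ) 1

/-- The ReLU activation. -/
def relu (x : ℝ) : ℝ := max x 0

open scoped Classical in
/-- Number of nonzero entries of a matrix. -/
noncomputable def nnzM {m n : ℕ} (W : Matrix (Fin m) (Fin n) ℝ) : ℕ :=
  (Finset.univ.filter fun p : Fin m × Fin n => W p.1 p.2 ≠ 0).card

open scoped Classical in
/-- Number of nonzero entries of a vector. -/
noncomputable def nnzV {m : ℕ} (b : Fin m → ℝ) : ℕ :=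
  (Finset.univ.filter fun i : Fin m => b i ≠ 0).card

/-- `MLPRep σ depth width params n m f`: the map `f : ℝ^n → ℝ^m` is a σ-MLP with `depth`
affine layers, all hidden layers of dimension at most `width`, and `params` nonzero
parameters, i.e. `f = L_depth ∘ (σ ∘ L_{depth-1}) ∘ ⋯ ∘ (σ ∘ L_1)` for affine maps `L_l`. -/
inductive MLPRep (σ : ℝ → ℝ) :
    (depth width params n m : ℕ) → ((Fin n → ℝ) → (Fin m → ℝ)) → Prop
  | affine {n m : ℕ} (W : Matrix (Fin m) (Fin n) ℝ) (b : Fin m → ℝ) :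
      MLPRep σ 1 0 (nnzM W + nnzV b) n m (fun x => W.mulVec x + b)
  | layer {n k m depth width params : ℕ}
      (W : Matrix (Fin k) (Fin n) ℝ) (b : Fin k → ℝ)
      {f : (Fin k → ℝ) → (Fin m → ℝ)}
      (hf : MLPRep σ depth width params k m f) :
      MLPRep σ (depth + 1) (max k width) (params + (nnzM W + nnzV b)) n m
        (fun x => f (fun i => σ ((W.mulVec x + b) i)))

/-- `f` is a σ-MLP (of some depth, width and parameter count). -/
def IsMLP (σ : ℝ → ℝ) {n m : ℕ} (f : (Fin n → ℝ) → (Fin m → ℝ)) : Prop :=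
  ∃ depth width params, MLPRep σ depth width params n m f

/-- The lifted vector field `V_f(x, y) = (0, f x)` on `ℝ^d × ℝ^D`. -/
def liftedVF {d D : ℕ} (f : (Fin d → ℝ) → (Fin D → ℝ)) :
    (Fin d → ℝ) × (Fin D → ℝ) → (Fin d → ℝ) × (Fin D → ℝ) :=
  fun p => (0, f p.1)

-- congruence
theorem IsMLP.congr {σ : ℝ → ℝ} {n m : ℕ} {f g : (Fin n → ℝ) → (Fin m → ℝ)}
    (h : IsMLP σ f) (hfg : ∀ x, f x = g x) : IsMLP σ g := by
  have : f = g := funext hfg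
  exact this ▸ h

theorem isMLP_affine {σ : ℝ → ℝ} {n m : ℕ} (W : Matrix (Fin m) (Fin n) ℝ) (b : Fin m → ℝ) :
    IsMLP σ (fun x => W.mulVec x + b) := ⟨_, _, _, MLPRep.affine W b⟩

theorem isMLP_linear_add {σ : ℝ → ℝ} {n m : ℕ} (l : ((Fin n → ℝ)) →ₗ[ℝ] ((Fin m → ℝ)))
    (c : Fin m → ℝ) : IsMLP σ (fun x => l x + c) := by
  refine (isMLP_affine (LinearMap.toMatrix' l) c).congr fun x => ?_
  rw [← Matrix.toLin'_apply, Matrix.toLin'_toMatrix']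

theorem isMLP_precomp_affine {σ : ℝ → ℝ} {n m r : ℕ} {f : (Fin m → ℝ) → (Fin r → ℝ)}
    (hf : IsMLP σ f) (A : Matrix (Fin m) (Fin n) ℝ) (c : Fin m → ℝ) :
    IsMLP σ (fun x => f (A.mulVec x + c)) := by
  obtain ⟨dp, w, p, hf⟩ := hf
  cases hf with
  | affine W b =>
      refine (isMLP_affine (W * A) (W.mulVec c + b)).congr fun x => ?_
      simp [Matrix.mulVec_add, ← Matrix.mulVec_mulVec, add_assoc]
  | layer W b hf' =>
      refine IsMLP.congr (⟨_, _, _, MLPRep.layer (W * A) (W.mulVec c + b) hf'⟩ : IsMLP σ _) fun x => ?_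
      simp [Matrix.mulVec_add, ← Matrix.mulVec_mulVec, add_assoc]

theorem isMLP_comp {σ : ℝ → ℝ} {n m r : ℕ} {g : (Fin n → ℝ) → (Fin m → ℝ)}
    {f : (Fin m → ℝ) → (Fin r → ℝ)} (hg : IsMLP σ g) (hf : IsMLP σ f) :
    IsMLP σ (fun x => f (g x)) := by
  obtain ⟨dp, w, p, hg⟩ := hg
  induction hg with
  | affine W b => exact isMLP_precomp_affine hf W b
  | layer W b hg' ih =>
      obtain ⟨dp', w', p', hih⟩ := ih hf
      exact ⟨_, _, _, MLPRep.layer W b hih⟩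

-- appended to base
theorem relu_sub_relu_neg (a : ℝ) : relu a - relu (-a) = a := by
  unfold relu
  rcases le_total a 0 with h | h
  · rw [max_eq_right h, max_eq_left (by linarith)]; ring
  · rw [max_eq_left h, max_eq_right (by linarith)]; ring

/-- Linear map gluing two linear maps via `Fin.append`. -/
def appendLin {n a b : ℕ} (l₁ : (Fin n → ℝ) →ₗ[ℝ] (Fin a → ℝ))
    (l₂ : (Fin n → ℝ) →ₗ[ℝ] (Fin b → ℝ)) : (Fin n → ℝ) →ₗ[ℝ] (Fin (a + b) → ℝ) where
  toFun z := Fin.append (l₁ z) (l₂ z)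
  map_add' x y := by
    funext i
    refine Fin.addCases (fun i => ?_) (fun i => ?_) i <;>
      simp [Fin.append_left, Fin.append_right]
  map_smul' c x := by
    funext i
    refine Fin.addCases (fun i => ?_) (fun i => ?_) i <;>
      simp [Fin.append_left, Fin.append_right]

@[simp] theorem appendLin_apply {n a b : ℕ} (l₁ : (Fin n → ℝ) →ₗ[ℝ] (Fin a → ℝ))
    (l₂ : (Fin n → ℝ) →ₗ[ℝ] (Fin b → ℝ)) (z : Fin n → ℝ) :
    appendLin l₁ l₂ z = Fin.append (l₁ z) (l₂ z) := rfl

theorem isMLP_linear {σ : ℝ → ℝ} {n m : ℕ} (l : ((Fin n → ℝ)) →ₗ[ℝ] ((Fin m → ℝ))) :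
    IsMLP σ (fun x => l x) :=
  (isMLP_linear_add l 0).congr fun x => by simp

@[simp] theorem fin_append_addNat_self {α : Type*} {m : ℕ} (u v : Fin m → α) (i : Fin m) :
    Fin.append u v (i.addNat m) = v i := by
  rw [← Fin.natAdd_eq_addNat]; exact Fin.append_right u v i

theorem isMLP_widen {n m : ℕ} {dp w p : ℕ} {f : (Fin n → ℝ) → (Fin m → ℝ)}
    (hf : MLPRep relu dp w p n m f) (c : ℕ) :
    IsMLP relu (fun z : Fin (n + c) → ℝ =>
      Fin.append (f (fun j => z (Fin.castAdd c j))) (fun j => z (Fin.natAdd n j))) := by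
  induction hf generalizing c with
  | @affine n m W b =>
      refine (isMLP_linear_add
        (appendLin ((Matrix.mulVecLin W).comp (LinearMap.funLeft ℝ ℝ (Fin.castAdd c)))
          (LinearMap.funLeft ℝ ℝ (Fin.natAdd n))) (Fin.append b (0 : Fin c → ℝ))).congr fun z => ?_
      funext i
      refine Fin.addCases (fun i => ?_) (fun i => ?_) i <;>
        simp [Fin.append_left, Fin.append_right, Function.comp_def, Matrix.mulVecLin_apply,
          LinearMap.funLeft_apply] <;> try rfl
  | @layer n k' m dp w p W b f' hf' ih =>
      -- first layer: z ↦ (W z₁ + b, z₂, -z₂), then relu, then (widened f', subtract)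
      set L₁ : (Fin (n + c) → ℝ) →ₗ[ℝ] (Fin (k' + (c + c)) → ℝ) :=
        appendLin ((Matrix.mulVecLin W).comp (LinearMap.funLeft ℝ ℝ (Fin.castAdd c)))
          (appendLin (LinearMap.funLeft ℝ ℝ (Fin.natAdd n))
            (-(LinearMap.funLeft ℝ ℝ (Fin.natAdd n)))) with hL₁
      set lpost : (Fin (m + (c + c)) → ℝ) →ₗ[ℝ] (Fin (m + c) → ℝ) :=
        appendLin (LinearMap.funLeft ℝ ℝ (Fin.castAdd (c + c)))
          ((LinearMap.funLeft ℝ ℝ (fun j => Fin.natAdd m (Fin.castAdd c j))) -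
           (LinearMap.funLeft ℝ ℝ (fun j => Fin.natAdd m (Fin.natAdd c j)))) with hlpost
      have houter : IsMLP relu (fun u : Fin (k' + (c + c)) → ℝ =>
          lpost (Fin.append (f' (fun j => u (Fin.castAdd (c + c) j)))
            (fun j => u (Fin.natAdd k' j)))) :=
        isMLP_comp (ih (c + c)) (isMLP_linear lpost)
      obtain ⟨d₂, w₂, p₂, hout⟩ := houter
      refine IsMLP.congr ⟨_, _, _, MLPRep.layer (LinearMap.toMatrix' L₁) (Fin.append b (0 : Fin (c + c) → ℝ)) hout⟩
        fun z => ?_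
      have hW₁ : (LinearMap.toMatrix' L₁).mulVec z = L₁ z := by
        rw [← Matrix.toLin'_apply, Matrix.toLin'_toMatrix']
      rw [hW₁]
      have hvec : (fun i => relu ((L₁ z + Fin.append b (0 : Fin (c + c) → ℝ)) i)) =
          Fin.append (fun i => relu ((W.mulVec (fun j => z (Fin.castAdd c j)) + b) i))
            (Fin.append (fun j => relu (z (Fin.natAdd n j)))
              (fun j => relu (-z (Fin.natAdd n j)))) := by
        funext i
        refine Fin.addCases (fun i => ?_) (fun i => ?_) i
        · simp [hL₁, Fin.append_left, Function.comp_def, Matrix.mulVecLin_apply,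
            LinearMap.funLeft_apply]
          try rfl
        · refine Fin.addCases (fun i => ?_) (fun i => ?_) i <;>
            simp [hL₁, Fin.append_left, Fin.append_right, Function.comp_def,
              Matrix.mulVecLin_apply, LinearMap.funLeft_apply] <;> try rfl
      rw [hvec]
      have h1 : (fun j => (Fin.append
            (fun i => relu ((W.mulVec (fun j => z (Fin.castAdd c j)) + b) i))
            (Fin.append (fun j => relu (z (Fin.natAdd n j)))
              (fun j => relu (-z (Fin.natAdd n j))))) (Fin.castAdd (c + c) j)) =
          (fun i => relu ((W.mulVec (fun j => z (Fin.castAdd c j)) + b) i)) := by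
        funext j; simp [Fin.append_left]
      rw [h1]
      funext i
      refine Fin.addCases (fun i => ?_) (fun i => ?_) i
      · simp [hlpost, Fin.append_left, Function.comp_def, LinearMap.funLeft_apply]
        try rfl
      · simp [hlpost, Fin.append_left, Fin.append_right, Function.comp_def,
          LinearMap.funLeft_apply, relu_sub_relu_neg]
        try rfl

@[simp] theorem funLeft_apply_fun {a b : ℕ} (g : Fin a → Fin b) (v : Fin b → ℝ) :
    LinearMap.funLeft ℝ ℝ g v = fun i => v (g i) := rfl

theorem IsMLP.widen {n m : ℕ} {f : (Fin n → ℝ) → (Fin m → ℝ)} (hf : IsMLP relu f) (c : ℕ) :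
    IsMLP relu (fun z : Fin (n + c) → ℝ =>
      Fin.append (f (fun j => z (Fin.castAdd c j))) (fun j => z (Fin.natAdd n j))) := by
  obtain ⟨dp, w, p, hf⟩ := hf; exact isMLP_widen hf c

/-- Stacking two MLPs with the same input. -/
theorem isMLP_stack {n m₁ m₂ : ℕ} {f : (Fin n → ℝ) → (Fin m₁ → ℝ)}
    {g : (Fin n → ℝ) → (Fin m₂ → ℝ)} (hf : IsMLP relu f) (hg : IsMLP relu g) :
    IsMLP relu (fun x => Fin.append (f x) (g x)) := by
  -- diag, widen f (carry n), swap, widen g (carry m₁), swap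
  have d1 : IsMLP relu (fun x : Fin n → ℝ => (appendLin (LinearMap.id) (LinearMap.id)) x) :=
    isMLP_linear _
  have h1 := isMLP_comp d1 (hf.widen n)
  -- h1 : x ↦ append (f (fst (append x x))) (snd (append x x)) = append (f x) x
  have h1' : IsMLP relu (fun x : Fin n → ℝ => Fin.append (f x) x) := by
    refine h1.congr fun x => ?_
    simp [Fin.append_left, Fin.append_right]
  have sw1 : IsMLP relu (fun v : Fin (m₁ + n) → ℝ =>
      (appendLin (LinearMap.funLeft ℝ ℝ (Fin.natAdd m₁)) (LinearMap.funLeft ℝ ℝ (Fin.castAdd n))) v) :=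
    isMLP_linear _
  have h2 := isMLP_comp (isMLP_comp h1' sw1) (hg.widen m₁)
  have h2' : IsMLP relu (fun x : Fin n → ℝ => Fin.append (g x) (f x)) := by
    refine h2.congr fun x => ?_
    simp [Fin.append_left, Fin.append_right]
  have sw2 : IsMLP relu (fun v : Fin (m₂ + m₁) → ℝ =>
      (appendLin (LinearMap.funLeft ℝ ℝ (Fin.natAdd m₂)) (LinearMap.funLeft ℝ ℝ (Fin.castAdd m₁))) v) :=
    isMLP_linear _
  refine (isMLP_comp h2' sw2).congr fun x => ?_
  simp [Fin.append_left, Fin.append_right]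

/-- Combine scalar MLPs into a vector MLP. -/
theorem isMLP_pi {n : ℕ} : ∀ {m : ℕ} (f : Fin m → ((Fin n → ℝ) → (Fin 1 → ℝ))),
    (∀ i, IsMLP relu (f i)) → IsMLP relu (fun x (i : Fin m) => f i x 0)
  | 0, f, _ => by
      refine (isMLP_affine (0 : Matrix (Fin 0) (Fin n) ℝ) 0).congr fun x => ?_
      funext i; exact i.elim0
  | m + 1, f, hf => by
      have hrest := isMLP_pi (fun i : Fin m => f i.succ) (fun i => hf i.succ)
      have hstack := isMLP_stack (hf 0) hrest
      have hre : IsMLP relu (fun v : Fin (1 + m) → ℝ =>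
          (LinearMap.funLeft ℝ ℝ (fun i : Fin (m + 1) => Fin.cast (Nat.add_comm m 1) i)) v) :=
        isMLP_linear _
      refine (isMLP_comp hstack hre).congr fun x => ?_
      funext i
      simp only [LinearMap.funLeft_apply, Function.comp_def]
      refine Fin.cases ?_ (fun i => ?_) i
      · have : Fin.cast (Nat.add_comm m 1) (0 : Fin (m + 1)) = Fin.castAdd m (0 : Fin 1) := by
          ext; simp
        rw [this, Fin.append_left]
      · have : Fin.cast (Nat.add_comm m 1) i.succ = Fin.natAdd 1 i := by
          ext; simp [Nat.add_comm]
        rw [this, Fin.append_right]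

theorem MLPRep.continuous {σ : ℝ → ℝ} (hσ : Continuous σ) {dp w p n m : ℕ}
    {f : (Fin n → ℝ) → (Fin m → ℝ)} (hf : MLPRep σ dp w p n m f) : Continuous f := by
  induction hf with
  | affine W b =>
      exact (continuous_const.matrix_mulVec continuous_id).add continuous_const
  | layer W b hf' ih =>
      refine ih.comp ?_
      refine continuous_pi fun i => hσ.comp ?_
      exact (continuous_apply i).comp
        ((continuous_const.matrix_mulVec continuous_id).add continuous_const)

theorem relu_continuous : Continuous relu := continuous_id.max continuous_const

theorem IsMLP.continuous {f : (Fin n → ℝ) → (Fin m → ℝ)} (hf : IsMLP relu f) :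
    Continuous f := by
  obtain ⟨dp, w, p, hf⟩ := hf; exact hf.continuous relu_continuous

def IsMLP1 {n : ℕ} (f : (Fin n → ℝ) → ℝ) : Prop :=
  IsMLP relu (fun x (_ : Fin 1) => f x)

theorem relu_of_nonneg {a : ℝ} (h : 0 ≤ a) : relu a = a := max_eq_left h
theorem relu_of_nonpos {a : ℝ} (h : a ≤ 0) : relu a = 0 := max_eq_right h

theorem isMLP1_const {n : ℕ} (c : ℝ) : IsMLP1 (fun _ : Fin n → ℝ => c) :=
  (isMLP_affine (0 : Matrix (Fin 1) (Fin n) ℝ) (fun _ => c)).congr fun x => by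
    funext j; simp [Matrix.mulVec]

theorem isMLP1_affine {n : ℕ} (i : Fin n) (a c : ℝ) :
    IsMLP1 (fun z : Fin n → ℝ => a * z i + c) :=
  (isMLP_linear_add (LinearMap.pi fun _ : Fin 1 => a • LinearMap.proj i) (fun _ => c)).congr
    fun z => by funext j; simp [LinearMap.pi_apply, smul_eq_mul]

theorem isMLP_max2 :
    IsMLP relu (fun u : Fin (1 + 1) → ℝ => fun _ : Fin 1 => max (u 0) (u 1)) := by
  have rep := MLPRep.layer (σ := relu)
    (!![1,-1;0,1;0,-1] : Matrix (Fin 3) (Fin (1+1)) ℝ) 0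
    (MLPRep.affine (!![1,1,-1] : Matrix (Fin 1) (Fin 3) ℝ) 0)
  refine IsMLP.congr ⟨_, _, _, rep⟩ fun u => ?_
  funext j
  have hj : j = 0 := Subsingleton.elim _ _
  subst hj
  simp [Matrix.mulVec, dotProduct, Fin.sum_univ_succ]
  rcases le_total (u 0) (u 1) with h | h
  · rw [show u 0 + -u 1 = u 0 - u 1 by ring, relu_of_nonpos (by linarith), max_eq_right h]
    linarith [relu_sub_relu_neg (u 1)]
  · rw [show u 0 + -u 1 = u 0 - u 1 by ring, relu_of_nonneg (by linarith), max_eq_left h]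
    linarith [relu_sub_relu_neg (u 1)]

theorem isMLP_min2 :
    IsMLP relu (fun u : Fin (1 + 1) → ℝ => fun _ : Fin 1 => min (u 0) (u 1)) := by
  have rep := MLPRep.layer (σ := relu)
    (!![1,-1;1,0;-1,0] : Matrix (Fin 3) (Fin (1+1)) ℝ) 0
    (MLPRep.affine (!![-1,1,-1] : Matrix (Fin 1) (Fin 3) ℝ) 0)
  refine IsMLP.congr ⟨_, _, _, rep⟩ fun u => ?_
  funext j
  have hj : j = 0 := Subsingleton.elim _ _
  subst hj
  simp [Matrix.mulVec, dotProduct, Fin.sum_univ_succ]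
  rcases le_total (u 0) (u 1) with h | h
  · rw [show u 0 + -u 1 = u 0 - u 1 by ring, relu_of_nonpos (by linarith), min_eq_left h]
    linarith [relu_sub_relu_neg (u 0)]
  · rw [show u 0 + -u 1 = u 0 - u 1 by ring, relu_of_nonneg (by linarith), min_eq_right h]
    linarith [relu_sub_relu_neg (u 0)]

theorem fin_zero_cast : ((0 : Fin (1 + 1))) = Fin.castAdd 1 (0 : Fin 1) := rfl

theorem fin_one_cast : ((1 : Fin (1 + 1))) = Fin.natAdd 1 (0 : Fin 1) := rfl

theorem IsMLP1.max {n : ℕ} {f g : (Fin n → ℝ) → ℝ} (hf : IsMLP1 f) (hg : IsMLP1 g) :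
    IsMLP1 (fun x => max (f x) (g x)) := by
  refine (isMLP_comp (isMLP_stack hf hg) isMLP_max2).congr fun x => ?_
  funext j
  simp only [show ((0 : Fin (1+1))) = Fin.castAdd 1 (0 : Fin 1) from rfl,
    show ((1 : Fin (1+1))) = Fin.natAdd 1 (0 : Fin 1) from rfl,
    Fin.append_left, Fin.append_right]

theorem IsMLP1.min {n : ℕ} {f g : (Fin n → ℝ) → ℝ} (hf : IsMLP1 f) (hg : IsMLP1 g) :
    IsMLP1 (fun x => min (f x) (g x)) := by
  refine (isMLP_comp (isMLP_stack hf hg) isMLP_min2).congr fun x => ?_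
  funext j
  simp only [show ((0 : Fin (1+1))) = Fin.castAdd 1 (0 : Fin 1) from rfl,
    show ((1 : Fin (1+1))) = Fin.natAdd 1 (0 : Fin 1) from rfl,
    Fin.append_left, Fin.append_right]


theorem IsMLP1.continuous' {n : ℕ} {f : (Fin n → ℝ) → ℝ} (hf : IsMLP1 f) :
    Continuous f := by
  have := IsMLP.continuous hf
  exact (continuous_apply (0 : Fin 1)).comp this

theorem cube_compact (d : ℕ) : IsCompact (cube01 d) :=
  isCompact_univ_pi fun _ => isCompact_Icc

/-- Scalar universal approximation on the cube via lattice Stone–Weierstrass. -/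
theorem scalar_approx (d : ℕ) (g : C(cube01 d, ℝ)) {ε : ℝ} (hε : 0 < ε) :
    ∃ f : (Fin d → ℝ) → ℝ, IsMLP1 f ∧ ∀ x : cube01 d, dist (f x.val) (g x) < ε := by
  haveI : CompactSpace (cube01 d) := isCompact_iff_compactSpace.mp (cube_compact d)
  set L : Set C(cube01 d, ℝ) :=
    {h | ∃ f : (Fin d → ℝ) → ℝ, IsMLP1 f ∧ ∀ x : cube01 d, h x = f x.val} with hL
  have mem_mk : ∀ (f : (Fin d → ℝ) → ℝ) (hf : IsMLP1 f),
      (⟨fun x => f x.val, hf.continuous'.comp continuous_subtype_val⟩ : C(cube01 d, ℝ)) ∈ L :=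
    fun f hf => ⟨f, hf, fun _ => rfl⟩
  have hclosed : closure L = ⊤ := by
    apply ContinuousMap.sublattice_closure_eq_top
    · exact ⟨_, mem_mk (fun _ => 0) (isMLP1_const 0)⟩
    · rintro h₁ ⟨f₁, hf₁, he₁⟩ h₂ ⟨f₂, hf₂, he₂⟩
      exact ⟨fun z => min (f₁ z) (f₂ z), hf₁.min hf₂, fun x => by
        simp [ContinuousMap.inf_apply, he₁ x, he₂ x]⟩
    · rintro h₁ ⟨f₁, hf₁, he₁⟩ h₂ ⟨f₂, hf₂, he₂⟩
      exact ⟨fun z => max (f₁ z) (f₂ z), hf₁.max hf₂, fun x => by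
        simp [ContinuousMap.sup_apply, he₁ x, he₂ x]⟩
    · intro v x y
      by_cases hxy : x = y
      · subst hxy
        exact ⟨_, mem_mk (fun _ => v x) (isMLP1_const (v x)), rfl, rfl⟩
      · have hval : x.val ≠ y.val := fun h => hxy (Subtype.ext h)
        obtain ⟨i, hi⟩ := Function.ne_iff.mp hval
        set a : ℝ := (v y - v x) / (y.val i - x.val i) with ha
        have hyx : y.val i - x.val i ≠ 0 := sub_ne_zero.mpr (Ne.symm hi)
        refine ⟨_, mem_mk (fun z => a * z i + (v x - a * x.val i))
          (isMLP1_affine i a (v x - a * x.val i)), ?_, ?_⟩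
        · simp only [ContinuousMap.coe_mk]; ring
        · simp only [ContinuousMap.coe_mk]
          have : a * (y.val i - x.val i) = v y - v x := div_mul_cancel₀ _ hyx
          nlinarith [this]
  -- extract approximation
  have hg : g ∈ closure L := by rw [hclosed]; trivial
  obtain ⟨h, hhL, hdist⟩ := Metric.mem_closure_iff.mp hg ε hε
  obtain ⟨f, hf, he⟩ := hhL
  refine ⟨f, hf, fun x => ?_⟩
  have := ContinuousMap.dist_apply_le_dist (f := g) (g := h) x
  rw [he x] at this
  calc dist (f x.val) (g x) = dist (g x) (f x.val) := dist_comm _ _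
    _ ≤ dist g h := this
    _ < ε := hdist

/-- **Statement 10.** The set of maps `[0,1]^d → ℝ^D` of the form `x ↦ π (Flow(V_f) (ι x))`,
with `f` a ReLU MLP, `ι x = (x, 0)` and `π (x, y) = y`, is dense in `C([0,1]^d, ℝ^D)` with the
uniform topology. -/
theorem lifted_flow_universal_approximation (d D : ℕ) (hd : 0 < d) (hD : 0 < D) :
    Dense {g : C(cube01 d, Fin D → ℝ) |
      ∃ f : (Fin d → ℝ) → (Fin D → ℝ), IsMLP relu f ∧
        ∃ φ : (Fin d → ℝ) × (Fin D → ℝ) → (Fin d → ℝ) × (Fin D → ℝ),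
          IsTime1Flow (liftedVF f) φ ∧
          ∀ x : cube01 d, g x = (φ ((x : Fin d → ℝ), 0)).2} := by
  haveI : CompactSpace (cube01 d) := isCompact_iff_compactSpace.mp (cube_compact d)
  rw [Metric.dense_iff]
  intro g ε hε
  -- approximate each coordinate
  have key : ∀ i : Fin D, ∃ f : (Fin d → ℝ) → ℝ, IsMLP1 f ∧
      ∀ x : cube01 d, dist (f x.val) (g x i) < ε := by
    intro i
    exact scalar_approx d ⟨fun x => g x i, (continuous_apply i).comp (map_continuous g)⟩ hε
  choose fi hfi hfid using key
  -- combine into one MLP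
  set F : (Fin d → ℝ) → (Fin D → ℝ) := fun x i => fi i x with hF
  have hFmlp : IsMLP relu F := by
    have := isMLP_pi (fun i => (fun x (_ : Fin 1) => fi i x)) (fun i => hfi i)
    exact this.congr fun x => rfl
  have hFcont : Continuous F := hFmlp.continuous
  set G : C(cube01 d, Fin D → ℝ) := ⟨fun x => F x.val, hFcont.comp continuous_subtype_val⟩
    with hG
  refine ⟨G, ?_, ?_⟩
  · -- G is in the ball around g
    rw [mem_ball]
    rw [ContinuousMap.dist_lt_iff hε]
    intro x
    rw [dist_pi_lt_iff hε]
    intro i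
    exact hfid i x
  · -- G is in the set
    refine ⟨F, hFmlp, fun p => (p.1, p.2 + F p.1), ?_, ?_⟩
    · intro p
      refine ⟨fun t => (p.1, p.2 + t • F p.1), by simp, fun t => ?_, by simp⟩
      have h2 : HasDerivAt (fun t : ℝ => p.2 + t • F p.1) (F p.1) t := by
        have := (hasDerivAt_id t).smul_const (F p.1)
        simpa using this.const_add p.2
      exact (hasDerivAt_const t p.1).prodMk h2
    · intro x
      show G x = 0 + F x.val
      rw [zero_add]
      rfl
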